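/- Let H be a separable complex Hilbert space with orthonormal basis {e_n}, let A be a bounded positive operator on H, and let ξ be a bounded sequence of nonnegative reals. If there is a partial isometry V with V*V equal to the range projection of A and ⟨VAV*e_j, e_j⟩ = ξ_j for all j, then there exist rank-one projections P_j such that A = ∑_j ξ_j P_j, the series converging in the strong operator topology. -/

import Mathlib

set_option synthInstance.maxHeartbeats 1000000
set_option maxHeartbeats 1000000

open scoped BigOperators ENNReal
open Filter Topology ContinuousLinearMap

variable {H : Type*} [NormedAddCommGroup H] [InnerProductSpace ℂ H]

/-- The rank-one operator `x ↦ ⟪v, x⟫ • v`. -/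
noncomputable def rankOneProj (v : H) : H →L[ℂ] H := (innerSL ℂ v).smulRight v

/-- A rank-one (orthogonal) projection: `v ⊗ v` for a unit vector `v`. -/
def IsRankOneProjection (P : H →L[ℂ] H) : Prop := ∃ v : H, ‖v‖ = 1 ∧ P = rankOneProj v

/-- The range projection of `A`: the orthogonal projection onto the closure of the range. -/
noncomputable def rangeProjection [CompleteSpace H] (A : H →L[ℂ] H) : H →L[ℂ] H :=
  haveI : CompleteSpace (LinearMap.range (A : H →ₗ[ℂ] H)).topologicalClosure :=
    IsClosed.completeSpace_coe (hs := (LinearMap.range (A : H →ₗ[ℂ] H)).isClosed_topologicalClosure)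
  (LinearMap.range (A : H →ₗ[ℂ] H)).topologicalClosure.subtypeL ∘L
    (Submodule.orthogonalProjectionOnto (LinearMap.range (A : H →ₗ[ℂ] H)).topologicalClosure)

theorem stmt5 [CompleteSpace H] (e : HilbertBasis ℕ ℂ H)
    (A : H →L[ℂ] H) (hA : A.IsPositive)
    (ξ : ℕ → ℝ) (hnonneg : ∀ j, 0 ≤ ξ j) (hbdd : ∃ C : ℝ, ∀ j, ξ j ≤ C)
    (V : H →L[ℂ] H) (hV : (adjoint V) ∘L V = rangeProjection A)
    (hdiag : ∀ j, (inner ℂ ((V ∘L A ∘L adjoint V) (e j)) (e j) : ℂ) = (ξ j : ℂ)) :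
    ∃ P : ℕ → H →L[ℂ] H, (∀ j, IsRankOneProjection (P j)) ∧
      ∀ x : H, Filter.Tendsto (fun n => ∑ j ∈ Finset.range n, ξ j • P j x)
        Filter.atTop (nhds (A x)) := by
  classical
  have hA0 : (0 : H →L[ℂ] H) ≤ A := (ContinuousLinearMap.nonneg_iff_isPositive A).mpr hA
  set S : H →L[ℂ] H := CFC.sqrt A with hSdef
  have hS2 : S * S = A := CFC.sqrt_mul_sqrt_self A hA0
  have hSpos : S.IsPositive := (ContinuousLinearMap.nonneg_iff_isPositive S).mp (CFC.sqrt_nonneg A)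
  have hSsa : adjoint S = S := hSpos.isSelfAdjoint
  have hSsymm : ∀ u v : H, (inner ℂ (S u) v : ℂ) = inner ℂ u (S v) := fun u v =>
    (ContinuousLinearMap.isSelfAdjoint_iff_isSymmetric.mp hSpos.isSelfAdjoint) u v
  have hSS : ∀ x : H, S (S x) = A x := by
    intro x; rw [← hS2]; rfl
  -- the square root maps into the closure of the range of A
  have hmem : ∀ x : H, S x ∈ (LinearMap.range (A : H →ₗ[ℂ] H)).topologicalClosure := by
    intro x
    rw [← Submodule.orthogonal_orthogonal_eq_closure]
    rw [Submodule.mem_orthogonal]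
    intro y hy
    have hy' : ∀ v ∈ LinearMap.range (A : H →ₗ[ℂ] H), (inner ℂ v y : ℂ) = 0 :=
      (Submodule.mem_orthogonal _ y).mp hy
    have hAy : (inner ℂ (A y) y : ℂ) = 0 := hy' (A y) (LinearMap.mem_range_self _ y)
    have hSy : S y = 0 := by
      have h1 : (inner ℂ (S y) (S y) : ℂ) = 0 := by
        rw [← hSsymm (S y) y, hSS, hAy]
      exact inner_self_eq_zero.mp h1
    rw [← hSsymm y x, hSy, inner_zero_left]
  have hRP : ∀ x : H, rangeProjection A (S x) = S x := by
    intro x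
    haveI : CompleteSpace ((LinearMap.range (A : H →ₗ[ℂ] H)).topologicalClosure : Submodule ℂ H) :=
      ((LinearMap.range (A : H →ₗ[ℂ] H)).isClosed_topologicalClosure).completeSpace_coe
    show (LinearMap.range (A : H →ₗ[ℂ] H)).topologicalClosure.starProjection (S x) = S x
    exact Submodule.starProjection_eq_self_iff.mpr (hmem x)
  set B : H →L[ℂ] H := S ∘L adjoint V with hB
  have hBadj : adjoint B = V ∘L S := by
    rw [hB, adjoint_comp, adjoint_adjoint, hSsa]
  -- B ∘ B† = A
  have hBBadj : ∀ x : H, B (adjoint B x) = A x := by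
    intro x
    rw [hBadj]
    have h1 : (adjoint V) (V (S x)) = rangeProjection A (S x) := by
      rw [← ContinuousLinearMap.comp_apply, hV]
    calc B ((V ∘L S) x) = S ((adjoint V) (V (S x))) := rfl
      _ = S (rangeProjection A (S x)) := by rw [h1]
      _ = S (S x) := by rw [hRP]
      _ = A x := hSS x
  -- B† ∘ B = V A V†
  have habb : ∀ x : H, adjoint B (B x) = (V ∘L A ∘L adjoint V) x := by
    intro x
    rw [hBadj]
    show V (S (S ((adjoint V) x))) = V (A ((adjoint V) x))
    rw [hSS]
  have hnorm : ∀ j, (inner ℂ (B (e j)) (B (e j)) : ℂ) = (ξ j : ℂ) := by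
    intro j
    calc (inner ℂ (B (e j)) (B (e j)) : ℂ)
        = inner ℂ (adjoint B (B (e j))) (e j) := (adjoint_inner_left B (e j) (B (e j))).symm
      _ = inner ℂ ((V ∘L A ∘L adjoint V) (e j)) (e j) := by rw [habb]
      _ = (ξ j : ℂ) := hdiag j
  have hnormsq : ∀ j, ‖B (e j)‖ ^ 2 = ξ j := by
    intro j
    have h := hnorm j
    rw [inner_self_eq_norm_sq_to_K] at h
    exact RCLike.ofReal_inj (K := ℂ).mp (by rw [RCLike.ofReal_pow]; exact h)
  -- the projections
  refine ⟨fun j => if h : B (e j) = 0 then rankOneProj (e j)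
      else rankOneProj ((‖B (e j)‖ : ℂ)⁻¹ • B (e j)), ?_, ?_⟩
  · intro j
    by_cases h : B (e j) = 0
    · exact ⟨e j, e.orthonormal.1 j, by simp [h]⟩
    · refine ⟨(‖B (e j)‖ : ℂ)⁻¹ • B (e j), ?_, by simp [h]⟩
      have hw : ‖B (e j)‖ ≠ 0 := norm_ne_zero_iff.mpr h
      rw [norm_smul]
      simp [hw]
  · intro x
    have key : ∀ j, ξ j • (if h : B (e j) = 0 then rankOneProj (e j)
        else rankOneProj ((‖B (e j)‖ : ℂ)⁻¹ • B (e j))) x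
        = (inner ℂ (B (e j)) x : ℂ) • B (e j) := by
      intro j
      by_cases h : B (e j) = 0
      · have hz : ξ j = 0 := by rw [← hnormsq j, h]; simp
        simp [h, hz]
      · rw [dif_neg h]
        have hw : (‖B (e j)‖ : ℂ) ≠ 0 := by
          simpa using norm_ne_zero_iff.mpr h
        have hx2 : ((ξ j : ℝ) : ℂ) = (‖B (e j)‖ : ℂ) ^ 2 := by
          rw [← hnormsq j]; push_cast; ring
        show ξ j • ((inner ℂ ((‖B (e j)‖ : ℂ)⁻¹ • B (e j)) x : ℂ)
            • ((‖B (e j)‖ : ℂ)⁻¹ • B (e j))) = (inner ℂ (B (e j)) x : ℂ) • B (e j)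
        rw [inner_smul_left]
        match_scalars
        field_simp [hw, Complex.conj_ofReal]
        rw [show (algebraMap ℝ ℂ) (ξ j) = (ξ j : ℂ) from rfl, hx2, map_div₀, map_one,
          Complex.conj_ofReal]
        field_simp
    have h1 := (e.hasSum_repr (adjoint B x)).mapL B
    have h2 : (fun j => B (e.repr (adjoint B x) j • e j))
        = fun j => (inner ℂ (B (e j)) x : ℂ) • B (e j) := by
      funext j
      rw [map_smul, e.repr_apply_apply, adjoint_inner_right]
    rw [h2, hBBadj x] at h1
    have htend := h1.tendsto_sum_nat
    exact htend.congr fun n => Finset.sum_congr rfl fun j _ => (key j).symm
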